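/- For each integer k ≥ 3, let φ_k(z) = z^k (identifying ℝ² with ℂ), which is the harmonic extension of e^{ikθ}. Then A^{φ_k} = ((k³ − 2k² − k + 2)/2) φ_k, where A^φ(z) = φ − z₁∂₁φ − z₂∂₂φ + z₁z₂[∂₁₂φ − z₂∂₁₁₁φ + z₁∂₂₁₁φ] + (1/2)(z₁²−z₂²)[∂₁₁φ + z₂∂₁₁₂φ + z₁∂₁₁₁φ]. -/
import Mathlib


noncomputable section

/-- Real partial derivative of a function on ℂ in the direction 1. -/
def cd1 (f : ℂ → ℂ) (z : ℂ) : ℂ := fderiv ℝ f z 1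

/-- Real partial derivative of a function on ℂ in the direction i. -/
def cd2 (f : ℂ → ℂ) (z : ℂ) : ℂ := fderiv ℝ f z Complex.I

/-- The coefficient `A^φ` for a (complex-valued) function on ℂ ≅ ℝ². -/
def AentC (φ : ℂ → ℂ) (z : ℂ) : ℂ :=
  φ z - (z.re : ℂ) * cd1 φ z - (z.im : ℂ) * cd2 φ z
    + (z.re : ℂ) * (z.im : ℂ) * (cd1 (cd2 φ) z
        - (z.im : ℂ) * cd1 (cd1 (cd1 φ)) z + (z.re : ℂ) * cd2 (cd1 (cd1 φ)) z)
    + (1 / 2) * ((z.re : ℂ) ^ 2 - (z.im : ℂ) ^ 2) * (cd1 (cd1 φ) z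
        + (z.im : ℂ) * cd1 (cd1 (cd2 φ)) z + (z.re : ℂ) * cd1 (cd1 (cd1 φ)) z)

lemma hasFDerivR (c : ℂ) (n : ℕ) (z : ℂ) :
    HasFDerivAt (fun w : ℂ => c * w ^ n)
      (((ContinuousLinearMap.smulRight (1 : ℂ →L[ℂ] ℂ) (c * n * z ^ (n - 1))).restrictScalars ℝ)) z := by
  have h : HasDerivAt (fun w : ℂ => c * w ^ n) (c * n * z ^ (n - 1)) z := by
    simpa [mul_assoc] using (hasDerivAt_pow n z).const_mul c
  exact h.hasFDerivAt.restrictScalars ℝ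

lemma cd1_mul_pow (c : ℂ) (n : ℕ) :
    cd1 (fun w : ℂ => c * w ^ n) = fun z => (c * n) * z ^ (n - 1) := by
  funext z
  unfold cd1
  rw [(hasFDerivR c n z).fderiv]
  simp [mul_assoc]

lemma cd2_mul_pow (c : ℂ) (n : ℕ) :
    cd2 (fun w : ℂ => c * w ^ n) = fun z => (Complex.I * (c * n)) * z ^ (n - 1) := by
  funext z
  unfold cd2
  rw [(hasFDerivR c n z).fderiv]
  simp [mul_assoc]

theorem stmt13 (k : ℕ) (hk : 3 ≤ k) (z : ℂ) :
    AentC (fun w => w ^ k) z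
      = (((k : ℂ) ^ 3 - 2 * (k : ℂ) ^ 2 - (k : ℂ) + 2) / 2) * z ^ k := by
  obtain ⟨m, rfl⟩ : ∃ m, k = m + 3 := ⟨k - 3, by omega⟩
  have e : (fun w : ℂ => w ^ (m + 3)) = fun w : ℂ => (1 : ℂ) * w ^ (m + 3) := by
    funext w; ring
  rw [e]
  unfold AentC
  simp only [cd1_mul_pow, cd2_mul_pow]
  simp only [show m + 3 - 1 = m + 2 from rfl, show m + 2 - 1 = m + 1 from rfl,
    show m + 1 - 1 = m from rfl]
  push_cast
  set x : ℂ := (z.re : ℂ)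
  set y : ℂ := (z.im : ℂ)
  have hz : x + y * Complex.I = z := Complex.re_add_im z
  set K : ℂ := (m : ℂ) + 3 with hK
  set u : ℂ := z ^ m with hu
  have hzk : z ^ (m + 3) = u * z ^ 3 := by rw [hu]; ring
  have hzk1 : z ^ (m + 2) = u * z ^ 2 := by rw [hu]; ring
  have hzk2 : z ^ (m + 1) = u * z := by rw [hu]; ring
  linear_combination
    (-K * u * z ^ 2 + K * (K - 1) * (K - 2) * u * x * y * Complex.I
      + (1 / 2) * (x ^ 2 - y ^ 2) * K * (K - 1) * (K - 2) * u
      + (1 / 2) * (K * (K - 1) + K * (K - 1) * (K - 2)) * u * z * (x + y * Complex.I + z)) * hz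
    + (-K * (K - 1) * (K - 2) * u * x * y ^ 2
      - (1 / 2) * (K * (K - 1) + K * (K - 1) * (K - 2)) * u * z * y ^ 2) * Complex.I_sq
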